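/- A linear operator T : F^n → F^n preserves gw-majorization if and only if T(x) = αRx for some R ∈ M_n(F) and α ∈ F such that either ker(R) = span{e} and e ∉ Im(R), or R is an invertible g-row stochastic matrix. -/

import Mathlib

open Matrix

def GRowStochastic {n : ℕ} {𝕜 : Type*} [RCLike 𝕜] (R : Matrix (Fin n) (Fin n) 𝕜) : Prop :=
  R *ᵥ (1 : Fin n → 𝕜) = 1

def VGwMaj {n : ℕ} {𝕜 : Type*} [RCLike 𝕜] (x y : Fin n → 𝕜) : Prop :=
  ∃ R : Matrix (Fin n) (Fin n) 𝕜, GRowStochastic R ∧ y = R *ᵥ x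

-- if x is not constant, anything is majorized by x
lemma vgw_of_not_mem {n : ℕ} {𝕜 : Type*} [RCLike 𝕜] {x : Fin n → 𝕜}
    (hx : x ∉ Submodule.span 𝕜 {(1 : Fin n → 𝕜)}) (y : Fin n → 𝕜) : VGwMaj x y := by
  have hne : ∃ i j : Fin n, x i ≠ x j := by
    by_contra h
    push_neg at h
    apply hx
    rcases isEmpty_or_nonempty (Fin n) with he | hne
    · have hx0 : x = 0 := funext fun i => he.elim i
      rw [hx0]; exact Submodule.zero_mem _
    · obtain ⟨i0⟩ := hne
      rw [Submodule.mem_span_singleton]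
      exact ⟨x i0, by ext j; simp [h i0 j]⟩
  obtain ⟨i, j, hij⟩ := hne
  have hd : x i - x j ≠ 0 := sub_ne_zero.mpr hij
  set t : Fin n → 𝕜 := fun k => (y k - x j) / (x i - x j) with ht
  have hij' : i ≠ j := fun h => hij (by rw [h])
  refine ⟨Matrix.of fun k l => t k * (if l = i then 1 else 0) + (1 - t k) * (if l = j then 1 else 0), ?_, ?_⟩
  · ext k
    simp only [GRowStochastic, mulVec, dotProduct, Matrix.of_apply, Pi.one_apply, mul_one,
      add_mul, Finset.sum_add_distrib, mul_ite, mul_zero]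
    simp [Finset.sum_ite_eq', hij']
  · ext k
    simp only [mulVec, dotProduct, Matrix.of_apply, add_mul, Finset.sum_add_distrib, mul_ite,
      mul_zero, ite_mul, one_mul, zero_mul, mul_assoc]
    rw [Finset.sum_ite_eq' , Finset.sum_ite_eq']
    simp only [Finset.mem_univ, if_true]
    simp only [ht]
    field_simp [ht]
    ring

lemma vgw_iff {n : ℕ} {𝕜 : Type*} [RCLike 𝕜] (x y : Fin n → 𝕜) :
    VGwMaj x y ↔ (x ∈ Submodule.span 𝕜 {(1 : Fin n → 𝕜)} → y = x) := by
  constructor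
  · rintro ⟨R, hR, rfl⟩ hx
    rw [Submodule.mem_span_singleton] at hx
    obtain ⟨c, rfl⟩ := hx
    rw [mulVec_smul, hR]
  · intro h
    by_cases hx : x ∈ Submodule.span 𝕜 {(1 : Fin n → 𝕜)}
    · rw [h hx]
      exact ⟨1, by simp [GRowStochastic], by simp⟩
    · exact vgw_of_not_mem hx y

theorem stmt_4 {n : ℕ} (hn : 2 ≤ n) {𝕜 : Type*} [RCLike 𝕜]
    (T : (Fin n → 𝕜) →ₗ[𝕜] (Fin n → 𝕜)) :
    (∀ x y, VGwMaj x y → VGwMaj (T x) (T y)) ↔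
      ∃ (α : 𝕜) (R : Matrix (Fin n) (Fin n) 𝕜),
        (∀ x, T x = α • (R *ᵥ x)) ∧
        ((LinearMap.ker R.mulVecLin = Submodule.span 𝕜 {(1 : Fin n → 𝕜)} ∧
            (1 : Fin n → 𝕜) ∉ LinearMap.range R.mulVecLin) ∨
          (GRowStochastic R ∧ IsUnit R)) := by
  simp only [vgw_iff] at *
  constructor
  · intro hT
    by_cases hP : ∀ x, x ∉ Submodule.span 𝕜 {(1 : Fin n → 𝕜)} → T x ∉ Submodule.span 𝕜 {(1 : Fin n → 𝕜)}
    · -- preimage of span ⊆ span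
      have hpre : ∀ x, T x ∈ Submodule.span 𝕜 {(1 : Fin n → 𝕜)} → x ∈ Submodule.span 𝕜 {(1 : Fin n → 𝕜)} := by
        intro x hx
        by_contra h
        exact hP x h hx
      by_cases h1 : T 1 = 0
      · -- ker T = span{1}, 1 ∉ range T
        refine ⟨1, LinearMap.toMatrix' T, ?_, Or.inl ⟨?_, ?_⟩⟩
        · intro x
          rw [one_smul, ← Matrix.toLin'_apply, Matrix.toLin'_toMatrix']
        · rw [show (LinearMap.toMatrix' T).mulVecLin = T from LinearMap.ext fun v => by
            rw [mulVecLin_apply, ← Matrix.toLin'_apply, Matrix.toLin'_toMatrix']]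
          apply le_antisymm
          · intro v hv
            exact hpre v (by simp [LinearMap.mem_ker.mp hv])
          · rw [Submodule.span_le]
            intro v hv
            simp only [Set.mem_singleton_iff] at hv
            subst hv
            exact h1
        · rw [show (LinearMap.toMatrix' T).mulVecLin = T from LinearMap.ext fun v => by
            rw [mulVecLin_apply, ← Matrix.toLin'_apply, Matrix.toLin'_toMatrix']]
          rintro ⟨v, hv⟩
          have hm : v ∈ Submodule.span 𝕜 {(1 : Fin n → 𝕜)} :=
            hpre v (by rw [hv]; exact Submodule.mem_span_singleton_self _)
          rw [Submodule.mem_span_singleton] at hm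
          obtain ⟨c, rfl⟩ := hm
          rw [_root_.map_smul, h1, smul_zero] at hv
          exact one_ne_zero (congrFun hv.symm ⟨0, by omega⟩)
      · -- T injective, T 1 = c • 1 with c ≠ 0
        have hker : LinearMap.ker T = ⊥ := by
          rw [LinearMap.ker_eq_bot']
          intro v hv
          have hm := hpre v (by simp [hv])
          rw [Submodule.mem_span_singleton] at hm
          obtain ⟨c, rfl⟩ := hm
          rcases eq_or_ne c 0 with rfl | hc
          · simp
          · exact absurd (by simpa [_root_.map_smul, smul_eq_zero, hc] using hv) h1
        have hTe : ∃ c : 𝕜, c ≠ 0 ∧ T 1 = c • 1 := by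
          have hsurj : Function.Surjective T :=
            LinearMap.injective_iff_surjective.mp (LinearMap.ker_eq_bot.mp hker)
          obtain ⟨v, hv⟩ := hsurj 1
          have hm := hpre v (by rw [hv]; exact Submodule.mem_span_singleton_self _)
          rw [Submodule.mem_span_singleton] at hm
          obtain ⟨c, rfl⟩ := hm
          have hc : c ≠ 0 := by
            rintro rfl
            rw [zero_smul, map_zero] at hv
            exact one_ne_zero (congrFun hv.symm ⟨0, by omega⟩)
          refine ⟨c⁻¹, inv_ne_zero hc, ?_⟩
          rw [_root_.map_smul] at hv
          calc T 1 = c⁻¹ • (c • T 1) := by rw [smul_smul, inv_mul_cancel₀ hc, one_smul]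
            _ = c⁻¹ • 1 := by rw [hv]
        obtain ⟨c, hc, hTe⟩ := hTe
        refine ⟨c, c⁻¹ • LinearMap.toMatrix' T, ?_, Or.inr ⟨?_, ?_⟩⟩
        · intro x
          rw [smul_mulVec, smul_smul, mul_inv_cancel₀ hc, one_smul,
            ← Matrix.toLin'_apply, Matrix.toLin'_toMatrix']
        · show (c⁻¹ • LinearMap.toMatrix' T) *ᵥ 1 = 1
          rw [smul_mulVec, show (LinearMap.toMatrix' T) *ᵥ 1 = T 1 by
            rw [← Matrix.toLin'_apply, Matrix.toLin'_toMatrix'], hTe, smul_smul,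
            inv_mul_cancel₀ hc, one_smul]
        · rw [← Matrix.mulVec_injective_iff_isUnit]
          intro a b hab
          simp only [smul_mulVec] at hab
          have hab' : (LinearMap.toMatrix' T) *ᵥ a = (LinearMap.toMatrix' T) *ᵥ b :=
            smul_right_injective _ (inv_ne_zero hc) hab
          rw [show ∀ v, (LinearMap.toMatrix' T) *ᵥ v = T v from fun v => by
            rw [← Matrix.toLin'_apply, Matrix.toLin'_toMatrix']] at hab'
          rw [show ∀ v, (LinearMap.toMatrix' T) *ᵥ v = T v from fun v => by
            rw [← Matrix.toLin'_apply, Matrix.toLin'_toMatrix']] at hab'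
          exact LinearMap.ker_eq_bot.mp hker hab'
    · -- ∃ x₀ ∉ span with T x₀ ∈ span: then T = 0
      push_neg at hP
      obtain ⟨x₀, hx₀, hTx₀⟩ := hP
      have hall : ∀ y, T y = T x₀ := by
        intro y
        exact hT x₀ y (fun h => absurd h hx₀) hTx₀
      have hT0 : ∀ y, T y = 0 := by
        intro y
        rw [hall y, ← hall 0, map_zero]
      refine ⟨0, 1, ?_, Or.inr ⟨?_, isUnit_one⟩⟩
      · intro x; rw [hT0, zero_smul]
      · show (1 : Matrix (Fin n) (Fin n) 𝕜) *ᵥ 1 = 1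
        rw [one_mulVec]
  · rintro ⟨α, R, hTR, hcond⟩ x y hxy hTx
    rcases eq_or_ne α 0 with rfl | hα
    · rw [hTR, hTR, zero_smul, zero_smul]
    rw [Submodule.mem_span_singleton] at hTx
    obtain ⟨d, hd⟩ := hTx
    rw [hTR] at hd
    have hRx : R *ᵥ x = (α⁻¹ * d) • 1 := by
      rw [mul_smul, hd, smul_smul, inv_mul_cancel₀ hα, one_smul]
    rcases hcond with ⟨hker, hrange⟩ | ⟨hst, hunit⟩
    · rcases eq_or_ne (α⁻¹ * d) 0 with h0 | h0
      · rw [h0, zero_smul] at hRx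
        have hx : x ∈ Submodule.span 𝕜 {(1 : Fin n → 𝕜)} := by
          rw [← hker]; exact LinearMap.mem_ker.mpr (by rw [mulVecLin_apply]; exact hRx)
        rw [hxy hx]
      · exfalso
        apply hrange
        refine ⟨(α⁻¹ * d)⁻¹ • x, ?_⟩
        rw [_root_.map_smul, mulVecLin_apply, hRx, smul_smul, inv_mul_cancel₀ h0, one_smul]
    · have hx : x ∈ Submodule.span 𝕜 {(1 : Fin n → 𝕜)} := by
        have : R *ᵥ x = R *ᵥ ((α⁻¹ * d) • 1) := by
          rw [mulVec_smul, hst, hRx]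
        have hinj := Matrix.mulVec_injective_iff_isUnit.mpr hunit
        rw [Submodule.mem_span_singleton]
        exact ⟨α⁻¹ * d, (hinj this).symm⟩
      rw [hxy hx]
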